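/- Let e be the absolute ramification index of F and let L be a field containing F complete with respect to a valuation extending v_p. Suppose 0 < s ≤ r < 1/((q−1)·e), and let f = ∑_{n≥0} a_n·u^n ∈ L[[u]] satisfy v_p(a_n) + n·qs → +∞ as n → ∞ (so f converges on the disc of valuation-radius qs). Then v^{[s,r]}(φ_q(f)) = v^{[qs,qr]}(f), where φ_q(f)(u) = f(u^q + π·u). -/

import Mathlib

noncomputable def pscomp {L : Type*} [CommRing L] (f s : PowerSeries L) : PowerSeries L :=
  PowerSeries.mk fun n =>
    ∑ m ∈ Finset.range (n + 1), PowerSeries.coeff m f * PowerSeries.coeff n (s ^ m)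

noncomputable def phiqPS {L : Type*} [CommRing L] (q : ℕ) (π : L) (f : PowerSeries L) :
    PowerSeries L :=
  pscomp f (PowerSeries.X ^ q + PowerSeries.C π * PowerSeries.X)

open PowerSeries in
lemma coeff_gpow {L : Type*} [CommRing L] (q : ℕ) (π : L) (m n : ℕ) :
    coeff n ((X ^ q + C π * X : PowerSeries L) ^ m)
      = ∑ k ∈ Finset.range (m+1),
          (if n = q * k + (m - k) then π ^ (m - k) * (m.choose k : L) else 0) := by
  rw [add_pow, map_sum]
  refine Finset.sum_congr rfl fun k hk => ?_
  have h1 : ((m.choose k : ℕ) : PowerSeries L) = C ((m.choose k : ℕ) : L) := by simp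
  have h2 : (X ^ q : PowerSeries L) ^ k * (C π * X) ^ (m - k) * (m.choose k : PowerSeries L)
      = C (π ^ (m-k) * (m.choose k : L)) * X ^ (q * k + (m - k)) := by
    rw [h1, mul_pow, ← map_pow, ← pow_mul, pow_add]
    rw [map_mul]; ring
  rw [h2, PowerSeries.coeff_C_mul, PowerSeries.coeff_X_pow, mul_ite, mul_one, mul_zero]

open PowerSeries in
lemma coeff_phiq {L : Type*} [CommRing L] (q : ℕ) (π : L) (f : PowerSeries L) (n : ℕ) :
    coeff n (phiqPS q π f)
      = ∑ m ∈ Finset.range (n+1), coeff m f *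
          ∑ k ∈ Finset.range (m+1),
            (if n = q * k + (m - k) then π ^ (m - k) * (m.choose k : L) else 0) := by
  rw [phiqPS, pscomp, PowerSeries.coeff_mk]
  exact Finset.sum_congr rfl fun m _ => by rw [coeff_gpow]

section helpers
variable {L : Type*} [Field L] (v : L → EReal)

lemma v_ne_bot (hv0 : v 0 = ⊤) (hv1 : v 1 = 0)
    (hvmul : ∀ x y : L, v (x * y) = v x + v y) (x : L) : v x ≠ ⊥ := by
  by_cases hx : x = 0
  · simp [hx, hv0]
  · intro h
    have h2 := hvmul x x⁻¹
    rw [mul_inv_cancel₀ hx, hv1, h, EReal.bot_add] at h2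
    exact absurd h2.symm (by simp)

lemma v_nat (hv0 : v 0 = ⊤) (hv1 : v 1 = 0)
    (hvadd : ∀ x y : L, min (v x) (v y) ≤ v (x + y)) (n : ℕ) : 0 ≤ v (n : L) := by
  induction n with
  | zero => simp [hv0]
  | succ n ih =>
    push_cast
    refine le_trans ?_ (hvadd (n : L) 1)
    simp [le_min_iff, ih, hv1.ge]

lemma v_neg (hv1 : v 1 = 0) (hvmul : ∀ x y : L, v (x * y) = v x + v y) (x : L) :
    v (-x) = v x := by
  have h1 : v (-1 : L) + v (-1 : L) = 0 := by
    rw [← hvmul, neg_one_mul, neg_neg, hv1]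
  have h2 : v (-1 : L) = 0 := by
    set w := v (-1 : L) with hw
    clear_value w
    induction w with
    | bot => rw [EReal.bot_add] at h1; exact absurd h1.symm (by simp)
    | coe a =>
      rw [← EReal.coe_add] at h1
      have ha : a + a = 0 := by exact_mod_cast h1
      have : a = 0 := by linarith
      rw [this]; rfl
    | top => rw [EReal.top_add_top] at h1; exact absurd h1.symm (by simp)
  rw [show -x = (-1 : L) * x by ring, hvmul, h2, zero_add]

lemma v_pi_pow (hv1 : v 1 = 0) (hvmul : ∀ x y : L, v (x * y) = v x + v y)
    (π : L) (e : ℕ) (hπ : v π = ((1 / (e : ℝ) : ℝ) : EReal)) (k : ℕ) :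
    v (π ^ k) = (((k : ℝ) / (e : ℝ) : ℝ) : EReal) := by
  induction k with
  | zero => simp [hv1]
  | succ k ih =>
    rw [pow_succ, hvmul, ih, hπ, ← EReal.coe_add]
    norm_cast
    push_cast
    ring

lemma v_sum_ge {ι : Type*} (hv0 : v 0 = ⊤)
    (hvadd : ∀ x y : L, min (v x) (v y) ≤ v (x + y))
    (t : Finset ι) (x : ι → L) (B : EReal) (d : ℝ)
    (h : ∀ i ∈ t, B ≤ v (x i) + (d : EReal)) :
    B ≤ v (∑ i ∈ t, x i) + (d : EReal) := by
  classical
  induction t using Finset.induction_on with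
  | empty => simp [hv0]
  | @insert a t ha ih =>
    rw [Finset.sum_insert ha]
    have h1 := h _ (Finset.mem_insert_self a t)
    have h2 := ih fun i hi => h i (Finset.mem_insert_of_mem hi)
    refine le_trans ?_ (add_le_add_left (hvadd _ _) _)
    rcases le_total (v (x a)) (v (∑ i ∈ t, x i)) with hc | hc
    · rwa [min_eq_left hc]
    · rwa [min_eq_right hc]

lemma v_sum_gt {ι : Type*} (hv0 : v 0 = ⊤)
    (hvadd : ∀ x y : L, min (v x) (v y) ≤ v (x + y))
    (t : Finset ι) (x : ι → L) (B : EReal) (hB : B ≠ ⊤)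
    (h : ∀ i ∈ t, B < v (x i)) :
    B < v (∑ i ∈ t, x i) := by
  classical
  induction t using Finset.induction_on with
  | empty => simp [hv0]; exact lt_top_iff_ne_top.2 hB
  | @insert a t ha ih =>
    rw [Finset.sum_insert ha]
    have h1 := h _ (Finset.mem_insert_self a t)
    have h2 := ih fun i hi => h i (Finset.mem_insert_of_mem hi)
    refine lt_of_lt_of_le ?_ (hvadd _ _)
    exact lt_min h1 h2

end helpers

set_option maxHeartbeats 2000000 in
/-- Let `L` be a field (containing `F`) with valuation `v` extending `v_p`
(`v π = 1/e`, `q` the residue cardinality, `e` the absolute ramification index).  Suppose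
`0 < s ≤ r < 1/((q-1)e)` and let `f = ∑ a_n u^n ∈ L[[u]]` satisfy
`v a_n + n (q s) → ∞` (convergence on the disc of valuation-radius `q s`).  Then
`v^{[s,r]}(φ_q f) = v^{[qs,qr]}(f)`. -/
theorem stmt_17
    (L : Type*) [Field L]
    (v : L → EReal)
    (hv0 : v 0 = ⊤) (hv1 : v 1 = 0)
    (hvmul : ∀ x y : L, v (x * y) = v x + v y)
    (hvadd : ∀ x y : L, min (v x) (v y) ≤ v (x + y))
    (π : L) (q e : ℕ) (hq : 2 ≤ q) (he : 0 < e)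
    (hπ : v π = ((1 / (e : ℝ) : ℝ) : EReal))
    (s r : ℝ) (hs : 0 < s) (hsr : s ≤ r) (hr : r < 1 / (((q : ℝ) - 1) * (e : ℝ)))
    (f : PowerSeries L)
    (hconv : ∀ M : ℝ, ∃ N : ℕ, ∀ n ≥ N,
      (M : EReal) ≤ v (PowerSeries.coeff n f) + (((n : ℝ) * ((q : ℝ) * s) : ℝ) : EReal)) :
    (⨅ t : Set.Icc s r, ⨅ n : ℕ,
        (v (PowerSeries.coeff n (phiqPS q π f)) + (((n : ℝ) * (t : ℝ) : ℝ) : EReal)))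
      = ⨅ t : Set.Icc ((q : ℝ) * s) ((q : ℝ) * r), ⨅ n : ℕ,
          (v (PowerSeries.coeff n f) + (((n : ℝ) * (t : ℝ) : ℝ) : EReal)) := by
  classical
  have heR : (0:ℝ) < (e:ℝ) := by exact_mod_cast he
  have hq1 : (0:ℝ) < (q:ℝ) - 1 := by
    have : (2:ℝ) ≤ q := by exact_mod_cast hq
    linarith
  have hqR : (0:ℝ) < (q:ℝ) := by linarith
  have hrkey : ((q:ℝ) - 1) * r < 1 / (e:ℝ) := by
    rw [lt_div_iff₀ (by positivity : (0:ℝ) < ((q:ℝ)-1) * e)] at hr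
    rw [lt_div_iff₀ heR]
    nlinarith
  set a : ℕ → L := fun n => PowerSeries.coeff n f with ha
  set b : ℕ → L := fun n => PowerSeries.coeff n (phiqPS q π f) with hb
  have hvnb := v_ne_bot v hv0 hv1 hvmul
  have hvnat := v_nat v hv0 hv1 hvadd
  have hvpow := v_pi_pow v hv1 hvmul π e hπ
  have shift_lt : ∀ (x : EReal), x ≠ ⊥ → ∀ (c d : ℝ), (c : EReal) < x + (d : EReal) →
      ((c - d : ℝ) : EReal) < x := by
    intro x hx c d h
    induction x with
    | bot => simp at hx
    | coe ρ =>
      rw [← EReal.coe_add] at h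
      have : c < ρ + d := EReal.coe_lt_coe_iff.1 h
      exact EReal.coe_lt_coe_iff.2 (by linarith)
    | top => exact EReal.coe_lt_top _
  apply le_antisymm
  · -- LHS ≤ RHS
    refine le_iInf fun t'' => ?_
    obtain ⟨tw, htw⟩ := t''
    show _ ≤ ⨅ n : ℕ, (v (a n) + (((n : ℝ) * tw : ℝ) : EReal))
    set c : EReal := ⨅ n : ℕ, (v (a n) + (((n : ℝ) * tw : ℝ) : EReal)) with hcdef
    have hcle : ∀ n : ℕ, c ≤ v (a n) + (((n : ℝ) * tw : ℝ) : EReal) := fun n => iInf_le _ n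
    by_cases hctop : c = ⊤
    · exact hctop ▸ le_top
    have hxlb : ∀ n : ℕ, v (a n) + (((n : ℝ) * ((q:ℝ) * s) : ℝ) : EReal)
        ≤ v (a n) + (((n : ℝ) * tw : ℝ) : EReal) := fun n =>
      add_le_add_right (EReal.coe_le_coe_iff.2
        (mul_le_mul_of_nonneg_left htw.1 (Nat.cast_nonneg n))) _
    have hcbot : c ≠ ⊥ := by
      obtain ⟨N, hN⟩ := hconv 0
      have hB0le : (((Finset.range N).inf fun n => v (a n) + (((n:ℝ) * tw : ℝ) : EReal)) ⊓ 0)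
          ≤ c := by
        refine le_iInf fun n => ?_
        rcases lt_or_ge n N with hn | hn
        · exact le_trans (min_le_left _ _) (Finset.inf_le (Finset.mem_range.2 hn))
        · exact le_trans (min_le_right _ _) (le_trans (hN n hn) (hxlb n))
      have hB0bot : (((Finset.range N).inf fun n => v (a n) + (((n:ℝ) * tw : ℝ) : EReal)) ⊓ 0)
          ≠ ⊥ := by
        have h1 : (⊥:EReal) < (Finset.range N).inf fun n => v (a n) + (((n:ℝ)*tw:ℝ):EReal) := by
          refine (Finset.lt_inf_iff (bot_lt_top : (⊥:EReal) < ⊤)).2 fun i _ => ?_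
          refine bot_lt_iff_ne_bot.2 fun h => ?_
          rcases EReal.add_eq_bot_iff.1 h with h' | h'
          · exact hvnb _ h'
          · exact (EReal.coe_ne_bot _) h'
        exact (lt_min h1 (by simp : (⊥:EReal) < 0)).ne'
      intro h
      exact hB0bot (le_bot_iff.1 (h ▸ hB0le))
    obtain ⟨cr, hcr⟩ : ∃ cr : ℝ, c = (cr : EReal) := ⟨c.toReal, (EReal.coe_toReal hctop hcbot).symm⟩
    obtain ⟨N₁, hN₁⟩ := hconv (cr + 1)
    have hbig : ∀ n : ℕ, N₁ ≤ n → (cr : EReal) < v (a n) + (((n:ℝ)*tw:ℝ):EReal) := fun n hn =>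
      lt_of_lt_of_le (by exact_mod_cast lt_add_one cr) (le_trans (hN₁ n hn) (hxlb n))
    set S := (Finset.range N₁).filter
      (fun m => v (a m) + (((m:ℝ)*tw:ℝ):EReal) = c) with hSdef
    have hSne : S.Nonempty := by
      by_contra hSe
      rw [Finset.not_nonempty_iff_eq_empty] at hSe
      have hallgt : ∀ n : ℕ, n < N₁ → c < v (a n) + (((n:ℝ)*tw:ℝ):EReal) := by
        intro n hn
        refine lt_of_le_of_ne (hcle n) fun hEq => ?_
        have : n ∈ S := Finset.mem_filter.2 ⟨Finset.mem_range.2 hn, hEq.symm⟩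
        rw [hSe] at this
        exact absurd this (Finset.notMem_empty n)
      have hD : c < (Finset.range N₁).inf (fun n => v (a n) + (((n:ℝ)*tw:ℝ):EReal)) := by
        refine (Finset.lt_inf_iff (hcr ▸ EReal.coe_lt_top cr)).2 fun i hi => ?_
        exact hallgt i (Finset.mem_range.1 hi)
      have hEc : c < min ((Finset.range N₁).inf (fun n => v (a n) + (((n:ℝ)*tw:ℝ):EReal)))
          (((cr+1:ℝ)):EReal) := by
        refine lt_min hD ?_
        rw [hcr]
        exact_mod_cast lt_add_one cr
      have hEle : min ((Finset.range N₁).inf (fun n => v (a n) + (((n:ℝ)*tw:ℝ):EReal)))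
          (((cr+1:ℝ)):EReal) ≤ c := by
        refine le_iInf fun n => ?_
        rcases lt_or_ge n N₁ with hn | hn
        · exact le_trans (min_le_left _ _) (Finset.inf_le (Finset.mem_range.2 hn))
        · exact le_trans (min_le_right _ _) (le_trans (hN₁ n hn) (hxlb n))
      exact absurd (lt_of_lt_of_le hEc hEle) (lt_irrefl c)
    set m₀ := S.max' hSne with hm₀def
    have hm₀S := S.max'_mem hSne
    have hm₀c : v (a m₀) + (((m₀:ℝ)*tw:ℝ):EReal) = c := (Finset.mem_filter.1 hm₀S).2
    have hm₀lt : ∀ m : ℕ, m₀ < m → c < v (a m) + (((m:ℝ)*tw:ℝ):EReal) := by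
      intro m hm
      refine lt_of_le_of_ne (hcle m) fun hEq => ?_
      rcases lt_or_ge m N₁ with h | h
      · exact absurd (S.le_max' m (Finset.mem_filter.2 ⟨Finset.mem_range.2 h, hEq.symm⟩))
          (not_le.2 hm)
      · have hb2 := hbig m h
        rw [← hEq, ← hcr] at hb2
        exact lt_irrefl _ hb2
    have hvam₀ : v (a m₀) = ((cr - (m₀:ℝ)*tw : ℝ) : EReal) := by
      have h9 : v (a m₀) = (v (a m₀) + (((m₀:ℝ)*tw:ℝ):EReal)) - (((m₀:ℝ)*tw:ℝ):EReal) :=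
        EReal.add_sub_cancel_right.symm
      rw [hm₀c, hcr, ← EReal.coe_sub] at h9
      exact h9
    -- choose the point t = tw / q in [s, r]
    have htmem : tw / (q:ℝ) ∈ Set.Icc s r := by
      constructor
      · rw [le_div_iff₀ hqR]
        calc s * q = (q:ℝ) * s := by ring
          _ ≤ tw := htw.1
      · rw [div_le_iff₀ hqR]
        calc tw ≤ (q:ℝ) * r := htw.2
          _ = r * q := by ring
    refine le_trans (iInf_le _ (⟨tw / (q:ℝ), htmem⟩ : Set.Icc s r)) ?_
    refine le_trans (iInf_le _ (q * m₀)) ?_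
    show v (b (q * m₀)) + ((((q*m₀:ℕ):ℝ) * (tw / (q:ℝ)) : ℝ) : EReal) ≤ c
    have hnt : (((q*m₀:ℕ):ℝ) * (tw / (q:ℝ)) : ℝ) = (m₀:ℝ)*tw := by
      push_cast
      field_simp
    rw [show ((((q*m₀:ℕ):ℝ) * (tw / (q:ℝ)) : ℝ) : EReal) = (((m₀:ℝ)*tw : ℝ) : EReal) by
      exact_mod_cast congrArg (fun x : ℝ => (x : EReal)) hnt]
    -- main estimate : v (b (q m₀)) ≤ v (a m₀)
    have hm₀mem : m₀ ∈ Finset.range (q*m₀+1) := by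
      refine Finset.mem_range.2 (Nat.lt_succ_of_le ?_)
      calc m₀ = 1 * m₀ := (one_mul m₀).symm
        _ ≤ q * m₀ := Nat.mul_le_mul_right m₀ (by omega)
    set W : ℕ → L := fun m => ∑ k ∈ Finset.range (m+1),
      (if q*m₀ = q * k + (m - k) then π ^ (m - k) * ((m.choose k : ℕ) : L) else 0) with hWdef
    have hW : W m₀ = 1 := by
      rw [hWdef]
      simp only
      rw [Finset.sum_eq_single m₀]
      · simp
      · intro k hk hkne
        have hkm : k < m₀ := lt_of_le_of_ne (Nat.lt_succ_iff.1 (Finset.mem_range.1 hk)) hkne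
        rw [if_neg]
        intro hEq
        have hc2 := congrArg (fun x : ℕ => (x:ℝ)) hEq
        push_cast [Nat.cast_sub hkm.le] at hc2
        have hkR : (k:ℝ) < (m₀:ℝ) := by exact_mod_cast hkm
        nlinarith [mul_pos hq1 (sub_pos.2 hkR)]
      · intro h; exact absurd (Finset.self_mem_range_succ m₀) h
    set R : L := ∑ m ∈ (Finset.range (q*m₀+1)).erase m₀, a m * W m with hRdef
    have hsplit : b (q*m₀) = a m₀ + R := by
      have hbn0 : b (q*m₀) = ∑ m ∈ Finset.range (q*m₀+1), a m * W m := by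
        rw [hb]
        exact coeff_phiq q π f (q*m₀)
      rw [hbn0, ← Finset.add_sum_erase _ _ hm₀mem, hW, mul_one, hRdef]
    have hR : (((cr - (m₀:ℝ)*tw) : ℝ) : EReal) < v R := by
      rw [hRdef]
      refine v_sum_gt v hv0 hvadd _ _ _ (EReal.coe_ne_top _) fun m hm => ?_
      obtain ⟨hmne, hmrange⟩ := Finset.mem_erase.1 hm
      rw [hWdef]
      simp only
      rw [Finset.mul_sum]
      refine v_sum_gt v hv0 hvadd _ _ _ (EReal.coe_ne_top _) fun k hk => ?_
      by_cases hcond : q*m₀ = q * k + (m - k)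
      · rw [if_pos hcond, hvmul]
        have hkm : k ≤ m := Nat.lt_succ_iff.1 (Finset.mem_range.1 hk)
        have hc2 := congrArg (fun x : ℕ => (x:ℝ)) hcond
        push_cast [Nat.cast_sub hkm] at hc2
        -- hc2 : q * m₀ = q * k + (m - k)  (in ℝ)
        have h5 : (m:ℝ) - (m₀:ℝ) = ((q:ℝ)-1)*((m₀:ℝ)-(k:ℝ)) := by linarith
        have hkm' : (k:ℝ) ≤ (m:ℝ) := by exact_mod_cast hkm
        have hne : (m:ℝ) ≠ (m₀:ℝ) := fun h => hmne (by exact_mod_cast h)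
        have hmm₀ : (m₀:ℝ) < (m:ℝ) := by
          rcases lt_or_ge (m₀:ℝ) (m:ℝ) with h | h
          · exact h
          · exfalso
            have h7 : (m₀:ℝ) - (k:ℝ) ≤ 0 := by
              by_contra h7
              push_neg at h7
              nlinarith [mul_pos hq1 h7]
            have hkm0 : (k:ℝ) = (m₀:ℝ) := le_antisymm (by linarith) (by linarith)
            rw [show (m₀:ℝ)-(k:ℝ) = 0 by linarith, mul_zero] at h5
            exact hne (by linarith)
        have hd : (0:ℝ) < (m₀:ℝ) - (k:ℝ) := by
          by_contra hd
          push_neg at hd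
          nlinarith [mul_nonpos_of_nonneg_of_nonpos hq1.le hd]
        have hmm₀n : m₀ < m := by exact_mod_cast hmm₀
        have hvam : ((cr - (m:ℝ)*tw : ℝ) : EReal) < v (a m) := by
          have hlt := hm₀lt m hmm₀n
          rw [hcr] at hlt
          exact shift_lt _ (hvnb _) _ _ hlt
        have hy : ((((m-k:ℕ):ℝ)/(e:ℝ) : ℝ) : EReal)
            ≤ v (π ^ (m - k) * ((m.choose k : ℕ) : L)) := by
          rw [hvmul, hvpow]
          nth_rewrite 1 [← add_zero ((((m-k:ℕ):ℝ)/(e:ℝ) : ℝ) : EReal)]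
          exact add_le_add_right (hvnat _) _
        have hrealkey : cr - (m₀:ℝ)*tw ≤ (cr - (m:ℝ)*tw) + ((m-k:ℕ):ℝ)/(e:ℝ) := by
          have hjq : ((m-k:ℕ):ℝ) = (q:ℝ)*((m₀:ℝ)-(k:ℝ)) := by
            rw [Nat.cast_sub hkm]
            push_cast
            linarith
          rw [hjq]
          have hA : ((q:ℝ)-1)*tw ≤ (q:ℝ)*(1/(e:ℝ)) := by
            have h3 := mul_le_mul_of_nonneg_left htw.2 hq1.le
            have h4 := mul_lt_mul_of_pos_left hrkey hqR
            nlinarith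
          have h5' := mul_le_mul_of_nonneg_left hA hd.le
          have h5t : ((m:ℝ) - (m₀:ℝ))*tw = (((q:ℝ)-1)*((m₀:ℝ)-(k:ℝ)))*tw := by rw [h5]
          ring_nf at h5t h5' ⊢
          linarith
        calc (((cr - (m₀:ℝ)*tw) : ℝ) : EReal)
            ≤ (((cr - (m:ℝ)*tw) + ((m-k:ℕ):ℝ)/(e:ℝ) : ℝ) : EReal) :=
              EReal.coe_le_coe_iff.2 hrealkey
          _ = ((cr - (m:ℝ)*tw : ℝ) : EReal) + ((((m-k:ℕ):ℝ)/(e:ℝ) : ℝ) : EReal) := by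
              rw [← EReal.coe_add]
          _ < v (a m) + ((((m-k:ℕ):ℝ)/(e:ℝ) : ℝ) : EReal) :=
              EReal.add_lt_add_right_coe hvam _
          _ ≤ v (a m) + v (π ^ (m - k) * ((m.choose k : ℕ) : L)) :=
              add_le_add_right hy _
      · rw [if_neg hcond, mul_zero, hv0]
        exact EReal.coe_lt_top _
    have hvb : v (b (q*m₀)) ≤ v (a m₀) := by
      rw [hsplit]
      by_contra hlt
      push_neg at hlt
      have h8 := hvadd (a m₀ + R) (-R)
      rw [add_neg_cancel_right, v_neg v hv1 hvmul] at h8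
      rcases min_cases (v (a m₀ + R)) (v R) with ⟨hEq, _⟩ | ⟨hEq, _⟩ <;> rw [hEq] at h8
      · exact absurd h8 (not_le.2 hlt)
      · rw [hvam₀] at h8
        exact absurd h8 (not_le.2 hR)
    calc v (b (q*m₀)) + (((m₀:ℝ)*tw : ℝ) : EReal)
        ≤ v (a m₀) + (((m₀:ℝ)*tw : ℝ) : EReal) := add_le_add_left hvb _
      _ = c := hm₀c

  · -- RHS ≤ LHS
    refine le_iInf fun t => le_iInf fun n => ?_
    obtain ⟨tv, htv⟩ := t
    have hmem : (q:ℝ) * tv ∈ Set.Icc ((q:ℝ)*s) ((q:ℝ)*r) :=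
      ⟨mul_le_mul_of_nonneg_left htv.1 hqR.le, mul_le_mul_of_nonneg_left htv.2 hqR.le⟩
    refine le_trans (iInf_le _ (⟨(q:ℝ)*tv, hmem⟩ : Set.Icc ((q:ℝ)*s) ((q:ℝ)*r))) ?_
    show (⨅ m : ℕ, (v (a m) + (((m : ℝ) * ((q:ℝ)*tv) : ℝ) : EReal)))
        ≤ v (b n) + (((n : ℝ) * tv : ℝ) : EReal)
    have hbn : b n = ∑ m ∈ Finset.range (n+1), a m *
          ∑ k ∈ Finset.range (m+1),
            (if n = q * k + (m - k) then π ^ (m - k) * (m.choose k : L) else 0) := by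
      rw [hb]; exact coeff_phiq q π f n
    rw [hbn]
    refine v_sum_ge v hv0 hvadd _ _ _ ((n:ℝ)*tv) fun m hm => ?_
    rw [Finset.mul_sum]
    refine v_sum_ge v hv0 hvadd _ _ _ ((n:ℝ)*tv) fun k hk => ?_
    by_cases hcond : n = q * k + (m - k)
    · rw [if_pos hcond]
      refine le_trans (iInf_le _ m) ?_
      rw [hvmul]
      have hkm : k ≤ m := Nat.lt_succ_iff.1 (Finset.mem_range.1 hk)
      have hy : ((((m-k:ℕ):ℝ)/(e:ℝ) : ℝ) : EReal) ≤ v (π ^ (m - k) * ((m.choose k : ℕ) : L)) := by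
        rw [hvmul, hvpow]
        nth_rewrite 1 [← add_zero ((((m-k:ℕ):ℝ)/(e:ℝ) : ℝ) : EReal)]
        exact add_le_add_right (hvnat _) _
      have hreal : (m:ℝ) * ((q:ℝ)*tv) ≤ ((m-k : ℕ):ℝ)/(e:ℝ) + (n:ℝ)*tv := by
        have hj : ((m-k : ℕ):ℝ) = (m:ℝ) - (k:ℝ) := by
          push_cast [Nat.cast_sub hkm]; ring
        have hn : (n:ℝ) = (q:ℝ)*(k:ℝ) + ((m:ℝ) - (k:ℝ)) := by
          rw [hcond]; push_cast [Nat.cast_sub hkm]; ring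
        rw [hj, hn]
        have hts : s ≤ tv := htv.1
        have htr : tv ≤ r := htv.2
        have hjnn : (0:ℝ) ≤ (m:ℝ) - (k:ℝ) := by
          have : (k:ℝ) ≤ m := by exact_mod_cast hkm
          linarith
        have h1 : ((q:ℝ)-1) * tv ≤ 1/(e:ℝ) :=
          le_of_lt (lt_of_le_of_lt (mul_le_mul_of_nonneg_left htr hq1.le) hrkey)
        have h3 := mul_le_mul_of_nonneg_left h1 hjnn
        ring_nf at h3 ⊢
        linarith [h3]
      calc v (a m) + (((m : ℝ) * ((q:ℝ)*tv) : ℝ) : EReal)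
          ≤ v (a m) + ((((m-k : ℕ):ℝ)/(e:ℝ) + (n:ℝ)*tv : ℝ) : EReal) :=
            add_le_add_right (EReal.coe_le_coe_iff.2 hreal) _
        _ = v (a m) + ((((m-k : ℕ):ℝ)/(e:ℝ) : ℝ) : EReal) + (((n:ℝ)*tv : ℝ) : EReal) := by
            rw [add_assoc, ← EReal.coe_add]
        _ ≤ v (a m) + v (π ^ (m - k) * ((m.choose k : ℕ) : L)) + (((n:ℝ)*tv : ℝ) : EReal) :=
            add_le_add_left (add_le_add_right hy _) _
    · rw [if_neg hcond, mul_zero, hv0, EReal.top_add_coe]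
      exact le_top
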